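/- For a finite connected simple graph G, EC(G) = 3 if and only if G is isomorphic to one of K₃, P₄, K_{1,3}. -/

import Mathlib

open SimpleGraph

/-- Two edges (as unordered pairs of vertices) share an endpoint. -/
def SharesEndpoint {V : Type*} (e f : Sym2 V) : Prop := ∃ v, v ∈ e ∧ v ∈ f

/-- `D` is an edge dominating set of `G`: `D` consists of edges of `G` and every
edge of `G` outside `D` shares an endpoint with some edge of `D`. -/
def IsEdgeDominating {V : Type*} (G : SimpleGraph V) (D : Set (Sym2 V)) : Prop :=
  D ⊆ G.edgeSet ∧ ∀ e ∈ G.edgeSet \ D, ∃ f ∈ D, SharesEndpoint e f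

/-- Two disjoint edge sets form an edge coalition: neither is an edge dominating
set but their union is. -/
def IsEdgeCoalition {V : Type*} (G : SimpleGraph V) (E₁ E₂ : Set (Sym2 V)) : Prop :=
  Disjoint E₁ E₂ ∧ ¬ IsEdgeDominating G E₁ ∧ ¬ IsEdgeDominating G E₂ ∧
    IsEdgeDominating G (E₁ ∪ E₂)

/-- An ec-partition of `G`: a partition of the edge set of `G` (into nonempty,
pairwise disjoint parts) such that every part either is a singleton edge
dominating set, or is not an edge dominating set but forms an edge coalition
with another part. -/
def IsECPartition {V : Type*} (G : SimpleGraph V) (P : Set (Set (Sym2 V))) : Prop :=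
  (∀ A ∈ P, A.Nonempty) ∧
  P.Pairwise Disjoint ∧
  ⋃₀ P = G.edgeSet ∧
  ∀ A ∈ P, ((∃ e, A = {e}) ∧ IsEdgeDominating G A) ∨
    (¬ IsEdgeDominating G A ∧ ∃ B ∈ P, B ≠ A ∧ IsEdgeCoalition G A B)

/-- The edge coalition number `EC(G)`: the maximum number of parts over all
ec-partitions of `G`. -/
noncomputable def edgeCoalitionNumber {V : Type*} (G : SimpleGraph V) : ℕ :=
  sSup {k | ∃ P, IsECPartition G P ∧ P.ncard = k}

/-- The star `K_{1,n}`: vertex `0` is the center, adjacent to the `n` leaves. -/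
def starGraph (n : ℕ) : SimpleGraph (Fin (n + 1)) :=
  SimpleGraph.fromRel fun u _ => u = 0

section Helpers
variable {V : Type*} {G : SimpleGraph V}

lemma shares_comm {e f : Sym2 V} (h : SharesEndpoint e f) : SharesEndpoint f e := by
  obtain ⟨v, hv1, hv2⟩ := h; exact ⟨v, hv2, hv1⟩

lemma dom_mono {T T' : Set (Sym2 V)} (h : IsEdgeDominating G T) (hTT' : T ⊆ T')
    (hT' : T' ⊆ G.edgeSet) : IsEdgeDominating G T' := by
  refine ⟨hT', fun e he => ?_⟩
  rcases he with ⟨heΩ, heT'⟩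
  obtain ⟨f, hf, hsh⟩ := h.2 e ⟨heΩ, fun hc => heT' (hTT' hc)⟩
  exact ⟨f, hTT' hf, hsh⟩

lemma not_dom_mono {T T' : Set (Sym2 V)} (hT : T ⊆ G.edgeSet) (hTT' : T' ⊆ T)
    (h : ¬ IsEdgeDominating G T) : ¬ IsEdgeDominating G T' := by
  intro h'
  exact h (dom_mono h' hTT' hT)

lemma not_dom_empty (hne : G.edgeSet.Nonempty) : ¬ IsEdgeDominating G (∅ : Set (Sym2 V)) := by
  rintro ⟨-, h2⟩
  obtain ⟨e, he⟩ := hne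
  obtain ⟨f, hf, -⟩ := h2 e ⟨he, by simp⟩
  exact hf

/-- witness of non-domination for a set of edges -/
lemma exists_witness {T : Set (Sym2 V)} (hT : T ⊆ G.edgeSet) (h : ¬ IsEdgeDominating G T) :
    ∃ e ∈ G.edgeSet, e ∉ T ∧ ∀ f ∈ T, ¬ SharesEndpoint e f := by
  rw [IsEdgeDominating] at h
  push_neg at h
  obtain ⟨e, ⟨he1, he2⟩, h3⟩ := h hT
  exact ⟨e, he1, he2, h3⟩

lemma exists_other_sharing (hconn : G.Connected) {e f : Sym2 V} (he : e ∈ G.edgeSet)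
    (hf : f ∈ G.edgeSet) (hne : f ≠ e) : ∃ g ∈ G.edgeSet, g ≠ e ∧ SharesEndpoint e g := by
  by_cases hsh : SharesEndpoint e f
  · exact ⟨f, hf, hne, hsh⟩
  · induction e using Sym2.ind with
  | _ a b =>
    induction f using Sym2.ind with
  | _ c d =>
    have hac : c ∉ s(a,b) := by
      intro hc
      exact hsh ⟨c, hc, Sym2.mem_mk_left c d⟩
    obtain ⟨w⟩ := hconn.preconnected a c
    obtain ⟨dd, -, h1, h2⟩ := w.exists_boundary_dart (fun v => v ∈ s(a,b)) (Sym2.mem_mk_left a b) hac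
    refine ⟨s(dd.toProd.1, dd.toProd.2), (G.mem_edgeSet).mpr dd.adj, ?_, ⟨dd.toProd.1, h1, Sym2.mem_mk_left _ _⟩⟩
    intro hc
    rw [← hc] at h2
    exact h2 (Sym2.mem_mk_right _ _)
end Helpers

section Helpers2
variable {V : Type*} [Fintype V] {G : SimpleGraph V}

lemma exists_locmin {U : Set (Sym2 V)} (hU : U ⊆ G.edgeSet) (hdom : IsEdgeDominating G U) :
    ∃ D, D ⊆ U ∧ IsEdgeDominating G D ∧ ∀ x ∈ D, ¬ IsEdgeDominating G (D \ {x}) := by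
  classical
  obtain ⟨n, hn⟩ : ∃ n, U.ncard = n := ⟨_, rfl⟩
  induction n using Nat.strong_induction_on generalizing U with
  | _ n ih =>
    by_cases h : ∃ x ∈ U, IsEdgeDominating G (U \ {x})
    · obtain ⟨x, hx, hdx⟩ := h
      have hfin : U.Finite := Set.Finite.subset (Set.toFinite _) hU
      have hlt : (U \ {x}).ncard < n := by
        rw [← hn]; exact Set.ncard_diff_singleton_lt_of_mem hx hfin
      obtain ⟨D, hD1, hD2, hD3⟩ := ih _ hlt (fun e he => hU he.1) hdx rfl
      exact ⟨D, fun e he => (hD1 he).1, hD2, hD3⟩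
    · push_neg at h
      exact ⟨U, subset_rfl, hdom, h⟩

lemma ore (h2 : ∀ e ∈ G.edgeSet, ∃ g ∈ G.edgeSet, g ≠ e ∧ SharesEndpoint e g)
    {D : Set (Sym2 V)} (hD : D ⊆ G.edgeSet) (hdom : IsEdgeDominating G D)
    (hmin : ∀ x ∈ D, ¬ IsEdgeDominating G (D \ {x})) :
    IsEdgeDominating G (G.edgeSet \ D) := by
  refine ⟨Set.diff_subset, fun e he => ?_⟩
  have heD : e ∈ D := by
    rcases he with ⟨heΩ, heN⟩
    by_contra hc
    exact heN ⟨heΩ, hc⟩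
  by_contra hno
  push_neg at hno
  apply hmin e heD
  refine ⟨fun g hg => hD hg.1, fun g hg => ?_⟩
  rcases hg with ⟨hgΩ, hgN⟩
  by_cases hge : g = e
  · subst hge
    obtain ⟨f₀, hf₀Ω, hf₀ne, hf₀sh⟩ := h2 g (hD heD)
    have hf₀D : f₀ ∈ D := by
      by_contra hc
      exact hno f₀ ⟨hf₀Ω, hc⟩ hf₀sh
    exact ⟨f₀, ⟨hf₀D, hf₀ne⟩, hf₀sh⟩
  · have hgD : g ∉ D := fun hc => hgN ⟨hc, hge⟩
    obtain ⟨f, hfD, hfsh⟩ := hdom.2 g ⟨hgΩ, hgD⟩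
    have hfe : f ≠ e := by
      rintro rfl
      exact hno g ⟨hgΩ, hgD⟩ (shares_comm hfsh)
    exact ⟨f, ⟨hfD, hfe⟩, hfsh⟩

/-- any ec-partition has at most `|E|` parts -/
lemma ecp_ncard_le {P : Set (Set (Sym2 V))} (hP : IsECPartition G P) :
    P.ncard ≤ G.edgeSet.ncard := by
  classical
  rcases Set.eq_empty_or_nonempty P with rfl | ⟨A₀, hA₀⟩
  · simp
  obtain ⟨e₀, he₀⟩ := hP.1 A₀ hA₀
  refine Set.ncard_le_ncard_of_injOn (fun A => if h : A.Nonempty then h.some else e₀)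
    (fun A hA => ?_) (fun A hA B hB hfeq => ?_) (Set.toFinite _)
  · have hne := hP.1 A hA
    simp only [dif_pos hne]
    have : hne.some ∈ ⋃₀ P := ⟨A, hA, hne.some_mem⟩
    rwa [hP.2.2.1] at this
  · have hneA := hP.1 A hA
    have hneB := hP.1 B hB
    simp only [dif_pos hneA, dif_pos hneB] at hfeq
    by_contra hAB
    have hdisj := hP.2.1 hA hB hAB
    have h1 := hneA.some_mem
    rw [hfeq] at h1
    exact (Set.disjoint_left.mp hdisj h1) hneB.some_mem
end Helpers2

section Gamma1
variable {V : Type*} [Fintype V] {G : SimpleGraph V}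

omit [Fintype V] in
lemma pair_dom' {a b : V} {h g : Sym2 V} (hdom : IsEdgeDominating G {s(a,b)})
    (hh : h ∈ G.edgeSet) (hg : g ∈ G.edgeSet) (hah : a ∈ h) (hbg : b ∈ g) :
    IsEdgeDominating G {h, g} := by
  refine ⟨by intro x hx; rcases hx with rfl | rfl; exacts [hh, hg], fun k hk => ?_⟩
  rcases hk with ⟨hkΩ, hkN⟩
  by_cases hke : k = s(a,b)
  · subst hke
    exact ⟨h, by simp, ⟨a, Sym2.mem_mk_left a b, hah⟩⟩
  · obtain ⟨f, hf, hsh⟩ := hdom.2 k ⟨hkΩ, by simpa using hke⟩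
    rw [Set.mem_singleton_iff] at hf
    subst hf
    obtain ⟨w, hwk, hwf⟩ := hsh
    rw [Sym2.mem_iff] at hwf
    rcases hwf with rfl | rfl
    · exact ⟨h, by simp, ⟨w, hwk, hah⟩⟩
    · exact ⟨g, by simp, ⟨w, hwk, hbg⟩⟩

lemma singleton_partition {e₀ : Sym2 V} (hdom : IsEdgeDominating G {e₀}) :
    IsECPartition G ((fun e => ({e} : Set (Sym2 V))) '' G.edgeSet) := by
  have he₀ : e₀ ∈ G.edgeSet := hdom.1 rfl
  refine ⟨?_, ?_, ?_, ?_⟩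
  · rintro A ⟨e, he, rfl⟩; exact ⟨e, rfl⟩
  · rintro A ⟨e, he, rfl⟩ B ⟨f, hf, rfl⟩ hAB
    simp only [ne_eq, Set.singleton_eq_singleton_iff] at hAB
    simpa using hAB
  · simp [Set.sUnion_image]
  · rintro A ⟨h, hh, rfl⟩
    by_cases hdomh : IsEdgeDominating G {h}
    · exact Or.inl ⟨⟨h, rfl⟩, hdomh⟩
    · refine Or.inr ⟨hdomh, ?_⟩
      obtain ⟨g, hgΩ, hgh, hgsh⟩ := exists_witness (by simpa using hh) hdomh
      have hgsh' : ¬ SharesEndpoint g h := hgsh h rfl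
      rw [Set.mem_singleton_iff] at hgh
      have hdomg : ¬ IsEdgeDominating G {g} := by
        intro hd
        obtain ⟨f, hf, hsh⟩ := hd.2 h ⟨hh, by simpa using fun hc => hgh hc.symm⟩
        rw [Set.mem_singleton_iff] at hf
        subst hf
        exact hgsh' (shares_comm hsh)
      refine ⟨{g}, ⟨g, hgΩ, rfl⟩, by simpa using hgh, ?_, hdomh, hdomg, ?_⟩
      · exact Set.disjoint_singleton.mpr (fun hc => hgh hc.symm)
      · -- dominating union
        have he₀h : e₀ ≠ h := by rintro rfl; exact hdomh hdom
        have he₀g : e₀ ≠ g := by rintro rfl; exact hdomg hdom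
        obtain ⟨u, v, rfl⟩ : ∃ u v, e₀ = s(u,v) := by
          induction e₀ using Sym2.ind with | _ u v => exact ⟨u, v, rfl⟩
        obtain ⟨fh, hfh, hshh⟩ := hdom.2 h ⟨hh, by simpa using fun hc => he₀h hc.symm⟩
        obtain ⟨fg, hfg, hshg⟩ := hdom.2 g ⟨hgΩ, by simpa using fun hc => he₀g hc.symm⟩
        rw [Set.mem_singleton_iff] at hfh hfg
        subst hfh; subst hfg
        obtain ⟨w, hwh, hwuv⟩ := hshh
        obtain ⟨w', hw'g, hw'uv⟩ := hshg
        rw [Sym2.mem_iff] at hwuv hw'uv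
        rw [Set.singleton_union]
        have hnothg : ∀ x, x ∈ h → x ∈ g → False := by
          intro x hx1 hx2
          exact hgsh' ⟨x, hx2, hx1⟩
        rcases hwuv with rfl | rfl <;> rcases hw'uv with rfl | rfl
        · exact (hnothg _ hwh hw'g).elim
        · exact pair_dom' hdom hh hgΩ hwh hw'g
        · rw [Sym2.eq_swap] at hdom
          exact pair_dom' hdom hh hgΩ hwh hw'g
        · exact (hnothg _ hwh hw'g).elim
end Gamma1

section Construction
variable {V : Type*} [Fintype V] {G : SimpleGraph V}

omit [Fintype V] in
lemma nonempty_two (hΩne : G.edgeSet.Nonempty) (hγ : ∀ e ∈ G.edgeSet, ¬ IsEdgeDominating G {e})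
    {D : Set (Sym2 V)} (hDΩ : D ⊆ G.edgeSet) (hdom : IsEdgeDominating G D) :
    ∃ x ∈ D, ∃ x' ∈ D, x' ≠ x := by
  rcases D.eq_empty_or_nonempty with rfl | ⟨x, hx⟩
  · exact absurd hdom (not_dom_empty hΩne)
  · by_contra hcon
    push_neg at hcon
    have hD : D = {x} := by
      ext e
      simp only [Set.mem_singleton_iff]
      exact ⟨fun he => hcon x hx e he, fun he => he ▸ hx⟩
    rw [hD] at hdom
    exact hγ x (hDΩ hx) hdom

lemma caseA (hΩne : G.edgeSet.Nonempty)
    (hγ : ∀ e ∈ G.edgeSet, ¬ IsEdgeDominating G {e})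
    {DA DB L : Set (Sym2 V)}
    (hDAΩ : DA ⊆ G.edgeSet) (hDBΩ : DB ⊆ G.edgeSet) (hLΩ : L ⊆ G.edgeSet)
    (hdomA : IsEdgeDominating G DA) (hminA : ∀ x ∈ DA, ¬ IsEdgeDominating G (DA \ {x}))
    (hdomB : IsEdgeDominating G DB) (hminB : ∀ x ∈ DB, ¬ IsEdgeDominating G (DB \ {x}))
    (hAB : Disjoint DA DB) (hLA : Disjoint L DA) (hLB : Disjoint L DB)
    (hRdom : ∀ z ∈ G.edgeSet \ (DA ∪ DB ∪ L), IsEdgeDominating G (L ∪ {z}))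
    {y : Sym2 V} (hy : y ∈ DB) (hynd : ¬ IsEdgeDominating G (L ∪ {y})) :
    ∃ P, IsECPartition G P ∧ 4 ≤ P.ncard := by
  classical
  obtain ⟨x, hx, x', hx', hxx'⟩ := nonempty_two hΩne hγ hDAΩ hdomA
  obtain ⟨y₁, hy₁, y₂, hy₂, hy12⟩ := nonempty_two hΩne hγ hDBΩ hdomB
  -- an element of DB different from y
  obtain ⟨z, hzB, hzy⟩ : ∃ z ∈ DB, z ≠ y := by
    by_cases h1 : y₁ = y
    · exact ⟨y₂, hy₂, h1 ▸ hy12⟩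
    · exact ⟨y₁, hy₁, h1⟩
  set R : Set (Sym2 V) := G.edgeSet \ (DA ∪ DB ∪ L) with hRdef
  set P : Set (Set (Sym2 V)) :=
    {({x} : Set (Sym2 V)), DA \ {x}, DB \ {y}, L ∪ {y}} ∪ ((fun u => ({u} : Set (Sym2 V))) '' R)
    with hPdef
  -- region facts
  have hyL : y ∉ L := fun hc => (Set.disjoint_left.mp hLB hc) hy
  have hxL : x ∉ L := fun hc => (Set.disjoint_left.mp hLA hc) hx
  have hxB : x ∉ DB := fun hc => (Set.disjoint_left.mp hAB hx) hc
  have hyA : y ∉ DA := fun hc => (Set.disjoint_left.mp hAB hc) hy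
  have hzA : z ∉ DA := fun hc => (Set.disjoint_left.mp hAB hc) hzB
  have hzL : z ∉ L := fun hc => (Set.disjoint_left.mp hLB hc) hzB
  have hRA : ∀ u ∈ R, u ∉ DA := fun u hu hc => hu.2 (Or.inl (Or.inl hc))
  have hRB : ∀ u ∈ R, u ∉ DB := fun u hu hc => hu.2 (Or.inl (Or.inr hc))
  have hRL : ∀ u ∈ R, u ∉ L := fun u hu hc => hu.2 (Or.inr hc)
  have hRΩ : R ⊆ G.edgeSet := Set.diff_subset
  -- key set identities
  have hDAeq : ({x} : Set (Sym2 V)) ∪ (DA \ {x}) = DA :=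
    Set.union_diff_cancel (Set.singleton_subset_iff.mpr hx)
  have hDAeq' : (DA \ {x}) ∪ {x} = DA :=
    Set.diff_union_of_subset (Set.singleton_subset_iff.mpr hx)
  have hBL : (DB \ {y}) ∪ (L ∪ {y}) = DB ∪ L := by
    ext e
    simp only [Set.mem_union, Set.mem_diff, Set.mem_singleton_iff]
    constructor
    · rintro (⟨h, -⟩ | h | rfl)
      · exact Or.inl h
      · exact Or.inr h
      · exact Or.inl hy
    · intro h
      by_cases he : e = y
      · exact Or.inr (Or.inr he)
      · rcases h with h | h
        · exact Or.inl ⟨h, he⟩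
        · exact Or.inr (Or.inl h)
  have hdomBL : IsEdgeDominating G ((DB \ {y}) ∪ (L ∪ {y})) := by
    rw [hBL]
    exact dom_mono hdomB Set.subset_union_left (Set.union_subset hDBΩ hLΩ)
  -- inequality facts between the named parts
  have hne1 : ({x} : Set (Sym2 V)) ≠ DA \ {x} := by
    intro h
    have hm : x' ∈ ({x} : Set (Sym2 V)) := by rw [h]; exact ⟨hx', hxx'⟩
    exact hxx' hm
  have hne2 : ({x} : Set (Sym2 V)) ≠ DB \ {y} := by
    intro h
    have hm : x ∈ DB \ {y} := by rw [← h]; rfl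
    exact hxB hm.1
  have hne3 : ({x} : Set (Sym2 V)) ≠ L ∪ {y} := by
    intro h
    have hm : x ∈ L ∪ {y} := by rw [← h]; rfl
    rcases hm with h' | h'
    · exact hxL h'
    · rw [Set.mem_singleton_iff] at h'
      subst h'
      exact hxB hy
  have hne4 : (DA \ {x}) ≠ DB \ {y} := by
    intro h
    have hm : x' ∈ DB \ {y} := by rw [← h]; exact ⟨hx', hxx'⟩
    exact (Set.disjoint_left.mp hAB hx') hm.1
  have hne5 : (DA \ {x}) ≠ L ∪ {y} := by
    intro h
    have hm : x' ∈ L ∪ {y} := by rw [← h]; exact ⟨hx', hxx'⟩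
    rcases hm with h' | h'
    · exact (Set.disjoint_left.mp hLA h') hx'
    · rw [Set.mem_singleton_iff] at h'
      subst h'
      exact hyA hx'
  have hne6 : (DB \ {y}) ≠ L ∪ {y} := by
    intro h
    have hm : z ∈ L ∪ {y} := by rw [← h]; exact ⟨hzB, hzy⟩
    rcases hm with h' | h'
    · exact hzL h'
    · exact hzy h'
  have hLyΩ : L ∪ {y} ⊆ G.edgeSet := Set.union_subset hLΩ (Set.singleton_subset_iff.mpr (hDBΩ hy))
  have hmemP : ∀ {T : Set (Sym2 V)}, T ∈ P ↔
      (T = {x} ∨ T = DA \ {x} ∨ T = DB \ {y} ∨ T = L ∪ {y} ∨ ∃ u ∈ R, T = {u}) := by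
    intro T
    constructor
    · rintro (hT | ⟨u, hu, rfl⟩)
      · simp only [Set.mem_insert_iff, Set.mem_singleton_iff] at hT
        tauto
      · exact Or.inr (Or.inr (Or.inr (Or.inr ⟨u, hu, rfl⟩)))
    · rintro (rfl | rfl | rfl | rfl | ⟨u, hu, rfl⟩)
      · exact Or.inl (by simp)
      · exact Or.inl (by simp)
      · exact Or.inl (by simp)
      · exact Or.inl (by simp)
      · exact Or.inr ⟨u, hu, rfl⟩
  have hP1 : ({x} : Set (Sym2 V)) ∈ P := hmemP.mpr (Or.inl rfl)
  have hP2 : DA \ {x} ∈ P := hmemP.mpr (Or.inr (Or.inl rfl))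
  have hP3 : DB \ {y} ∈ P := hmemP.mpr (Or.inr (Or.inr (Or.inl rfl)))
  have hP4 : L ∪ {y} ∈ P := hmemP.mpr (Or.inr (Or.inr (Or.inr (Or.inl rfl))))
  -- disjointness facts
  have d12 : Disjoint ({x} : Set (Sym2 V)) (DA \ {x}) := by
    rw [Set.disjoint_left]; rintro e rfl he2; exact he2.2 rfl
  have d13 : Disjoint ({x} : Set (Sym2 V)) (DB \ {y}) := by
    rw [Set.disjoint_left]; rintro e rfl he2; exact hxB he2.1
  have d14 : Disjoint ({x} : Set (Sym2 V)) (L ∪ {y}) := by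
    rw [Set.disjoint_left]; rintro e rfl he2
    rcases he2 with h | h
    · exact hxL h
    · rw [Set.mem_singleton_iff] at h; subst h; exact hxB hy
  have d23 : Disjoint (DA \ {x}) (DB \ {y}) := by
    rw [Set.disjoint_left]; rintro e he1 he2
    exact (Set.disjoint_left.mp hAB he1.1) he2.1
  have d24 : Disjoint (DA \ {x}) (L ∪ {y}) := by
    rw [Set.disjoint_left]; rintro e he1 he2
    rcases he2 with h | h
    · exact (Set.disjoint_left.mp hLA h) he1.1
    · rw [Set.mem_singleton_iff] at h; subst h; exact hyA he1.1
  have d34 : Disjoint (DB \ {y}) (L ∪ {y}) := by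
    rw [Set.disjoint_left]; rintro e he1 he2
    rcases he2 with h | h
    · exact (Set.disjoint_left.mp hLB h) he1.1
    · exact he1.2 h
  have dR1 : ∀ u ∈ R, Disjoint ({x} : Set (Sym2 V)) {u} := by
    intro u hu
    rw [Set.disjoint_singleton]
    rintro rfl
    exact hRA x hu hx
  have dR2 : ∀ u ∈ R, Disjoint (DA \ {x}) {u} := by
    intro u hu
    rw [Set.disjoint_left]; rintro e he1 he2
    rw [Set.mem_singleton_iff] at he2; subst he2
    exact hRA e hu he1.1
  have dR3 : ∀ u ∈ R, Disjoint (DB \ {y}) {u} := by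
    intro u hu
    rw [Set.disjoint_left]; rintro e he1 he2
    rw [Set.mem_singleton_iff] at he2; subst he2
    exact hRB e hu he1.1
  have dR4 : ∀ u ∈ R, Disjoint (L ∪ {y}) {u} := by
    intro u hu
    rw [Set.disjoint_left]; rintro e he1 he2
    rw [Set.mem_singleton_iff] at he2
    rcases he1 with h | h
    · exact hRL u hu (he2 ▸ h)
    · rw [Set.mem_singleton_iff] at h
      exact hRB y (he2.symm.trans h ▸ hu) hy
  refine ⟨P, ⟨?_, ?_, ?_, ?_⟩, ?_⟩
  · -- nonempty parts
    intro A hA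
    rcases hmemP.mp hA with rfl | rfl | rfl | rfl | ⟨u, hu, rfl⟩
    · exact ⟨x, rfl⟩
    · exact ⟨x', hx', hxx'⟩
    · exact ⟨z, hzB, hzy⟩
    · exact ⟨y, Or.inr rfl⟩
    · exact ⟨u, rfl⟩
  · -- pairwise disjoint
    intro A hA B hB hne
    rcases hmemP.mp hA with rfl | rfl | rfl | rfl | ⟨u, hu, rfl⟩ <;>
      rcases hmemP.mp hB with rfl | rfl | rfl | rfl | ⟨u', hu', rfl⟩ <;>
      first
        | exact (hne rfl).elim
        | exact d12 | exact d13 | exact d14 | exact d23 | exact d24 | exact d34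
        | exact d12.symm | exact d13.symm | exact d14.symm | exact d23.symm
        | exact d24.symm | exact d34.symm
        | exact dR1 u' hu' | exact (dR1 u hu).symm
        | exact dR2 u' hu' | exact (dR2 u hu).symm
        | exact dR3 u' hu' | exact (dR3 u hu).symm
        | exact dR4 u' hu' | exact (dR4 u hu).symm
        | exact Set.disjoint_singleton.mpr (fun h => hne (by rw [h]))
  · -- union is the edge set
    apply subset_antisymm
    · rintro e ⟨A, hA, heA⟩
      rcases hmemP.mp hA with rfl | rfl | rfl | rfl | ⟨u, hu, rfl⟩
      · rw [Set.mem_singleton_iff] at heA; subst heA; exact hDAΩ hx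
      · exact hDAΩ heA.1
      · exact hDBΩ heA.1
      · exact hLyΩ heA
      · rw [Set.mem_singleton_iff] at heA; subst heA; exact hRΩ hu
    · intro e he
      by_cases h1 : e ∈ DA
      · by_cases h2 : e = x
        · exact ⟨{x}, hP1, h2 ▸ rfl⟩
        · exact ⟨DA \ {x}, hP2, h1, h2⟩
      · by_cases h3 : e ∈ DB
        · by_cases h4 : e = y
          · exact ⟨L ∪ {y}, hP4, Or.inr (Set.mem_singleton_iff.mpr h4)⟩
          · exact ⟨DB \ {y}, hP3, h3, h4⟩
        · by_cases h5 : e ∈ L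
          · exact ⟨L ∪ {y}, hP4, Or.inl h5⟩
          · have heR : e ∈ R := ⟨he, by
              rintro (h | h)
              · rcases h with h | h
                exacts [h1 h, h3 h]
              · exact h5 h⟩
            exact ⟨{e}, hmemP.mpr (Or.inr (Or.inr (Or.inr (Or.inr ⟨e, heR, rfl⟩)))), rfl⟩
  · -- part conditions
    intro A hA
    rcases hmemP.mp hA with rfl | rfl | rfl | rfl | ⟨u, hu, rfl⟩
    · refine Or.inr ⟨hγ x (hDAΩ hx), DA \ {x}, hP2, hne1.symm, d12, hγ x (hDAΩ hx),
        hminA x hx, ?_⟩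
      rw [hDAeq]; exact hdomA
    · refine Or.inr ⟨hminA x hx, {x}, hP1, hne1, d12.symm, hminA x hx, hγ x (hDAΩ hx), ?_⟩
      rw [hDAeq']; exact hdomA
    · exact Or.inr ⟨hminB y hy, L ∪ {y}, hP4, hne6.symm, d34, hminB y hy, hynd, hdomBL⟩
    · exact Or.inr ⟨hynd, DB \ {y}, hP3, hne6, d34.symm, hynd, hminB y hy,
        by rw [Set.union_comm]; exact hdomBL⟩
    · refine Or.inr ⟨hγ u (hRΩ hu), L ∪ {y}, hP4, ?_, (dR4 u hu).symm, hγ u (hRΩ hu), hynd, ?_⟩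
      · intro h
        have : y ∈ ({u} : Set (Sym2 V)) := h ▸ Or.inr rfl
        rw [Set.mem_singleton_iff] at this; subst this
        exact hRB y hu hy
      · refine dom_mono (hRdom u hu) ?_ (Set.union_subset (Set.singleton_subset_iff.mpr (hRΩ hu)) hLyΩ)
        intro e he
        rcases he with h | h
        · exact Or.inr (Or.inl h)
        · exact Or.inl h
  · -- at least 4 parts
    have hQsub : ({({x} : Set (Sym2 V)), DA \ {x}, DB \ {y}, L ∪ {y}} : Set (Set (Sym2 V))) ⊆ P := by
      rintro A (rfl | rfl | rfl | rfl)
      exacts [hP1, hP2, hP3, hP4]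
    have hPfin : P.Finite :=
      Set.Finite.union (((Set.finite_singleton _).insert _ |>.insert _ |>.insert _))
        ((Set.toFinite R).image _)
    have hnm1 : ({x} : Set (Sym2 V)) ∉ ({DA \ {x}, DB \ {y}, L ∪ {y}} : Set (Set (Sym2 V))) := by
      rintro (h | h | h)
      exacts [hne1 h, hne2 h, hne3 h]
    have hnm2 : (DA \ {x}) ∉ ({DB \ {y}, L ∪ {y}} : Set (Set (Sym2 V))) := by
      rintro (h | h)
      exacts [hne4 h, hne5 h]
    have hnm3 : (DB \ {y}) ∉ ({L ∪ {y}} : Set (Set (Sym2 V))) := by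
      rintro h
      exact hne6 h
    have hQ4 : ({({x} : Set (Sym2 V)), DA \ {x}, DB \ {y}, L ∪ {y}} : Set (Set (Sym2 V))).ncard = 4 := by
      rw [Set.ncard_insert_of_notMem hnm1 ((Set.finite_singleton _).insert _ |>.insert _),
        Set.ncard_insert_of_notMem hnm2 ((Set.finite_singleton _).insert _),
        Set.ncard_insert_of_notMem hnm3 (Set.finite_singleton _),
        Set.ncard_singleton]
    calc 4 = _ := hQ4.symm
    _ ≤ P.ncard := Set.ncard_le_ncard hQsub hPfin
end Construction

section ConstructionB
variable {V : Type*} [Fintype V] {G : SimpleGraph V}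

lemma caseB (hΩne : G.edgeSet.Nonempty)
    (hγ : ∀ e ∈ G.edgeSet, ¬ IsEdgeDominating G {e})
    {D₂ L : Set (Sym2 V)} (hD₂Ω : D₂ ⊆ G.edgeSet) (hLΩ : L ⊆ G.edgeSet)
    (hdom₂ : IsEdgeDominating G D₂)
    (hLD₂ : Disjoint L D₂) (hLnd : ¬ IsEdgeDominating G L) (hLne : L.Nonempty)
    (hall : ∀ y ∈ G.edgeSet \ L, IsEdgeDominating G (L ∪ {y}))
    {w : Sym2 V} (hwΩ : w ∈ G.edgeSet) (hwL : w ∉ L) (hwD₂ : w ∉ D₂) :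
    ∃ P, IsECPartition G P ∧ 4 ≤ P.ncard := by
  classical
  set M : Set (Sym2 V) := G.edgeSet \ (L ∪ {w}) with hMdef
  have hMΩ : M ⊆ G.edgeSet := Set.diff_subset
  have hD₂M : D₂ ⊆ M := by
    intro e he
    refine ⟨hD₂Ω he, ?_⟩
    rintro (h | h)
    · exact (Set.disjoint_right.mp hLD₂ he) h
    · rw [Set.mem_singleton_iff] at h; subst h; exact hwD₂ he
  have hdomM : IsEdgeDominating G M := dom_mono hdom₂ hD₂M hMΩ
  obtain ⟨S, hSM, hdomS, hminS⟩ := exists_locmin hMΩ hdomM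
  have hSΩ : S ⊆ G.edgeSet := hSM.trans hMΩ
  obtain ⟨s, hs, s', hs', hss'⟩ := nonempty_two hΩne hγ hSΩ hdomS
  have hwM : w ∉ M := fun h => h.2 (Or.inr rfl)
  have hML : ∀ u ∈ M, u ∉ L := fun u hu h => hu.2 (Or.inl h)
  have hMw : ∀ u ∈ M, u ≠ w := fun u hu h => hwM (h ▸ hu)
  have hsL : s ∉ L := hML s (hSM hs)
  have hdomLw : IsEdgeDominating G (L ∪ {w}) := hall w ⟨hwΩ, hwL⟩
  have hdomLu : ∀ u ∈ M, IsEdgeDominating G (L ∪ {u}) :=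
    fun u hu => hall u ⟨hMΩ hu, hML u hu⟩
  have hSs : (S \ {s}) ∪ {s} = S := Set.diff_union_of_subset (Set.singleton_subset_iff.mpr hs)
  set P : Set (Set (Sym2 V)) :=
    {L, ({w} : Set (Sym2 V)), S \ {s}} ∪ ((fun u => ({u} : Set (Sym2 V))) '' (M \ (S \ {s})))
    with hPdef
  have hmemP : ∀ {T : Set (Sym2 V)}, T ∈ P ↔
      (T = L ∨ T = {w} ∨ T = S \ {s} ∨ ∃ u ∈ M \ (S \ {s}), T = {u}) := by
    intro T
    constructor
    · rintro (hT | ⟨u, hu, rfl⟩)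
      · simp only [Set.mem_insert_iff, Set.mem_singleton_iff] at hT
        tauto
      · exact Or.inr (Or.inr (Or.inr ⟨u, hu, rfl⟩))
    · rintro (rfl | rfl | rfl | ⟨u, hu, rfl⟩)
      · exact Or.inl (by simp)
      · exact Or.inl (by simp)
      · exact Or.inl (by simp)
      · exact Or.inr ⟨u, hu, rfl⟩
  have hPL : L ∈ P := hmemP.mpr (Or.inl rfl)
  have hPw : ({w} : Set (Sym2 V)) ∈ P := hmemP.mpr (Or.inr (Or.inl rfl))
  have hPS : S \ {s} ∈ P := hmemP.mpr (Or.inr (Or.inr (Or.inl rfl)))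
  have hsMS : s ∈ M \ (S \ {s}) := ⟨hSM hs, fun h => h.2 rfl⟩
  have hPs : ({s} : Set (Sym2 V)) ∈ P := hmemP.mpr (Or.inr (Or.inr (Or.inr ⟨s, hsMS, rfl⟩)))
  -- disjointness
  have d12 : Disjoint L ({w} : Set (Sym2 V)) := by
    rw [Set.disjoint_right]; rintro e he1 he2
    rw [Set.mem_singleton_iff] at he1; subst he1; exact hwL he2
  have d13 : Disjoint L (S \ {s}) := by
    rw [Set.disjoint_left]; intro e he1 he2
    exact hML e (hSM he2.1) he1
  have d1u : ∀ u ∈ M \ (S \ {s}), Disjoint L ({u} : Set (Sym2 V)) := by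
    intro u hu
    rw [Set.disjoint_right]; rintro e he1 he2
    rw [Set.mem_singleton_iff] at he1; subst he1
    exact hML _ hu.1 he2
  have d23 : Disjoint ({w} : Set (Sym2 V)) (S \ {s}) := by
    rw [Set.disjoint_left]; rintro e rfl he2
    exact hwM (hSM he2.1)
  have d2u : ∀ u ∈ M \ (S \ {s}), Disjoint ({w} : Set (Sym2 V)) ({u} : Set (Sym2 V)) := by
    intro u hu
    rw [Set.disjoint_singleton]
    exact fun h => hMw u hu.1 h.symm
  have d3u : ∀ u ∈ M \ (S \ {s}), Disjoint (S \ {s}) ({u} : Set (Sym2 V)) := by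
    intro u hu
    rw [Set.disjoint_right]; rintro e he1 he2
    rw [Set.mem_singleton_iff] at he1; subst he1
    exact hu.2 he2
  -- part inequalities
  obtain ⟨l, hl⟩ := hLne
  have hne12 : L ≠ ({w} : Set (Sym2 V)) := by
    intro h
    have hm : w ∈ L := by rw [h]; rfl
    exact hwL hm
  have hne13 : L ≠ S \ {s} := by
    intro h
    have hm : l ∈ S \ {s} := by rw [← h]; exact hl
    exact hML l (hSM hm.1) hl
  have hne1s : L ≠ ({s} : Set (Sym2 V)) := by
    intro h
    have hm : s ∈ L := by rw [h]; rfl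
    exact hsL hm
  have hne23 : ({w} : Set (Sym2 V)) ≠ S \ {s} := by
    intro h
    have hm : w ∈ S \ {s} := by rw [← h]; rfl
    exact hwM (hSM hm.1)
  have hne2s : ({w} : Set (Sym2 V)) ≠ ({s} : Set (Sym2 V)) := by
    intro h
    have hm : w = s := by
      have : w ∈ ({s} : Set (Sym2 V)) := by rw [← h]; rfl
      simpa using this
    exact hMw s (hSM hs) hm.symm
  have hne3s : (S \ {s}) ≠ ({s} : Set (Sym2 V)) := by
    intro h
    have hm : s ∈ S \ {s} := by rw [h]; rfl
    exact hm.2 rfl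
  refine ⟨P, ⟨?_, ?_, ?_, ?_⟩, ?_⟩
  · intro A hA
    rcases hmemP.mp hA with rfl | rfl | rfl | ⟨u, hu, rfl⟩
    · exact ⟨l, hl⟩
    · exact ⟨w, rfl⟩
    · exact ⟨s', hs', hss'⟩
    · exact ⟨u, rfl⟩
  · intro A hA B hB hne
    rcases hmemP.mp hA with rfl | rfl | rfl | ⟨u, hu, rfl⟩ <;>
      rcases hmemP.mp hB with rfl | rfl | rfl | ⟨u', hu', rfl⟩ <;>
      first
        | exact (hne rfl).elim
        | exact d12 | exact d13 | exact d23
        | exact d12.symm | exact d13.symm | exact d23.symm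
        | exact d1u u' hu' | exact (d1u u hu).symm
        | exact d2u u' hu' | exact (d2u u hu).symm
        | exact d3u u' hu' | exact (d3u u hu).symm
        | exact Set.disjoint_singleton.mpr (fun h => hne (by rw [h]))
  · apply subset_antisymm
    · rintro e ⟨A, hA, heA⟩
      rcases hmemP.mp hA with rfl | rfl | rfl | ⟨u, hu, rfl⟩
      · exact hLΩ heA
      · rw [Set.mem_singleton_iff] at heA; subst heA; exact hwΩ
      · exact hSΩ heA.1
      · rw [Set.mem_singleton_iff] at heA; subst heA; exact hMΩ hu.1
    · intro e he
      by_cases h1 : e ∈ L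
      · exact ⟨L, hPL, h1⟩
      · by_cases h2 : e = w
        · exact ⟨{w}, hPw, Set.mem_singleton_iff.mpr h2⟩
        · have heM : e ∈ M := ⟨he, by
            rintro (h | h)
            · exact h1 h
            · exact h2 (Set.mem_singleton_iff.mp h)⟩
          by_cases h3 : e ∈ S \ {s}
          · exact ⟨S \ {s}, hPS, h3⟩
          · exact ⟨{e}, hmemP.mpr (Or.inr (Or.inr (Or.inr ⟨e, ⟨heM, h3⟩, rfl⟩))), rfl⟩
  · intro A hA
    rcases hmemP.mp hA with rfl | rfl | rfl | ⟨u, hu, rfl⟩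
    · exact Or.inr ⟨hLnd, {w}, hPw, hne12.symm, d12, hLnd, hγ w hwΩ, hdomLw⟩
    · exact Or.inr ⟨hγ w hwΩ, L, hPL, hne12, d12.symm, hγ w hwΩ, hLnd,
        by rw [Set.union_comm]; exact hdomLw⟩
    · refine Or.inr ⟨hminS s hs, {s}, hPs, hne3s.symm, ?_, hminS s hs, hγ s (hSΩ hs), ?_⟩
      · rw [Set.disjoint_right]; rintro e he1 he2
        rw [Set.mem_singleton_iff] at he1; subst he1
        exact he2.2 rfl
      · rw [hSs]; exact hdomS
    · refine Or.inr ⟨hγ u (hMΩ hu.1), L, hPL, ?_, (d1u u hu).symm, hγ u (hMΩ hu.1), hLnd,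
        by rw [Set.union_comm]; exact hdomLu u hu.1⟩
      intro h
      have hm : u ∈ L := by rw [h]; rfl
      exact hML u hu.1 hm
  · have hQsub : ({L, ({w} : Set (Sym2 V)), S \ {s}, {s}} : Set (Set (Sym2 V))) ⊆ P := by
      rintro A (rfl | rfl | rfl | rfl)
      exacts [hPL, hPw, hPS, hPs]
    have hPfin : P.Finite :=
      Set.Finite.union ((Set.finite_singleton _).insert _ |>.insert _)
        ((Set.toFinite _).image _)
    have hnm1 : L ∉ ({({w} : Set (Sym2 V)), S \ {s}, {s}} : Set (Set (Sym2 V))) := by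
      rintro (h | h | h)
      exacts [hne12 h, hne13 h, hne1s h]
    have hnm2 : ({w} : Set (Sym2 V)) ∉ ({S \ {s}, {s}} : Set (Set (Sym2 V))) := by
      rintro (h | h)
      exacts [hne23 h, hne2s h]
    have hnm3 : (S \ {s}) ∉ ({({s} : Set (Sym2 V))} : Set (Set (Sym2 V))) := fun h => hne3s h
    have hQ4 : ({L, ({w} : Set (Sym2 V)), S \ {s}, {s}} : Set (Set (Sym2 V))).ncard = 4 := by
      rw [Set.ncard_insert_of_notMem hnm1 ((Set.finite_singleton _).insert _ |>.insert _),
        Set.ncard_insert_of_notMem hnm2 ((Set.finite_singleton _).insert _),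
        Set.ncard_insert_of_notMem hnm3 (Set.finite_singleton _),
        Set.ncard_singleton]
    calc 4 = _ := hQ4.symm
    _ ≤ P.ncard := Set.ncard_le_ncard hQsub hPfin
end ConstructionB

section FourParts
variable {V : Type*} [Fintype V] {G : SimpleGraph V}

lemma dom_univ : IsEdgeDominating G G.edgeSet :=
  ⟨subset_rfl, fun _ he => (he.2 he.1).elim⟩

lemma four_parts (hconn : G.Connected) (hΩne : G.edgeSet.Nonempty)
    (hγ : ∀ e ∈ G.edgeSet, ¬ IsEdgeDominating G {e}) :
    ∃ P, IsECPartition G P ∧ 4 ≤ P.ncard := by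
  classical
  obtain ⟨e₀, he₀⟩ := hΩne
  -- there are at least two edges
  obtain ⟨f₀, hf₀, hf₀ne⟩ : ∃ f ∈ G.edgeSet, f ≠ e₀ := by
    by_contra hcon
    push_neg at hcon
    apply hγ e₀ he₀
    refine ⟨Set.singleton_subset_iff.mpr he₀, fun e he => ?_⟩
    exact absurd (Set.mem_singleton_iff.mpr (hcon e he.1)) he.2
  have h2 : ∀ e ∈ G.edgeSet, ∃ g ∈ G.edgeSet, g ≠ e ∧ SharesEndpoint e g := by
    intro e he
    by_cases hee₀ : e = e₀
    · exact exists_other_sharing hconn he hf₀ (by rw [hee₀]; exact hf₀ne)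
    · exact exists_other_sharing hconn he he₀ (fun h => hee₀ h.symm)
  -- peel off two disjoint locally minimal dominating sets
  obtain ⟨D₁, hD₁Ω, hdom₁, hmin₁⟩ := exists_locmin subset_rfl (dom_univ (G := G))
  have hU : IsEdgeDominating G (G.edgeSet \ D₁) := ore h2 hD₁Ω hdom₁ hmin₁
  obtain ⟨D₂, hD₂U, hdom₂, hmin₂⟩ := exists_locmin (Set.diff_subset) hU
  have hD₂Ω : D₂ ⊆ G.edgeSet := hD₂U.trans Set.diff_subset
  have hD₁D₂ : Disjoint D₁ D₂ := by
    rw [Set.disjoint_right]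
    intro e he
    exact (hD₂U he).2
  -- a maximal non-dominating subset of the rest
  set ℒ : Set (Set (Sym2 V)) :=
    {L | L ⊆ G.edgeSet \ (D₁ ∪ D₂) ∧ ¬ IsEdgeDominating G L} with hℒdef
  have hℒfin : ℒ.Finite := by
    apply Set.Finite.subset (Set.Finite.finite_subsets (Set.toFinite (G.edgeSet \ (D₁ ∪ D₂))))
    intro L hL
    exact hL.1
  have hℒne : ℒ.Nonempty := ⟨∅, Set.empty_subset _, not_dom_empty ⟨e₀, he₀⟩⟩
  obtain ⟨L, hLmem, hLmax⟩ := Set.Finite.exists_maximalFor id ℒ hℒfin hℒne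
  obtain ⟨hLsub, hLnd⟩ := hLmem
  have hLΩ : L ⊆ G.edgeSet := hLsub.trans Set.diff_subset
  have hLD₁ : Disjoint L D₁ := by
    rw [Set.disjoint_left]
    intro e he hc
    exact (hLsub he).2 (Or.inl hc)
  have hLD₂ : Disjoint L D₂ := by
    rw [Set.disjoint_left]
    intro e he hc
    exact (hLsub he).2 (Or.inr hc)
  have hRdom : ∀ z ∈ G.edgeSet \ (D₁ ∪ D₂ ∪ L), IsEdgeDominating G (L ∪ {z}) := by
    intro z hz
    by_contra hnd
    have hzL : z ∉ L := fun h => hz.2 (Or.inr h)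
    have hmem : L ∪ {z} ∈ ℒ := by
      constructor
      · apply Set.union_subset hLsub
        rw [Set.singleton_subset_iff]
        exact ⟨hz.1, fun h => hz.2 (Or.inl h)⟩
      · exact hnd
    have heq : L ∪ {z} ⊆ L := hLmax hmem Set.subset_union_left
    apply hzL
    exact heq (Or.inr rfl)
  by_cases hA : ∃ y, (y ∈ D₁ ∨ y ∈ D₂) ∧ ¬ IsEdgeDominating G (L ∪ {y})
  · obtain ⟨y, hy, hynd⟩ := hA
    rcases hy with hy | hy
    · -- y ∈ D₁ : apply caseA with DA = D₂, DB = D₁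
      refine caseA ⟨e₀, he₀⟩ hγ hD₂Ω hD₁Ω hLΩ hdom₂ hmin₂ hdom₁ hmin₁ hD₁D₂.symm hLD₂ hLD₁
        ?_ hy hynd
      intro z hz
      apply hRdom
      refine ⟨hz.1, ?_⟩
      intro hc
      apply hz.2
      rcases hc with (hc | hc) | hc
      · exact Or.inl (Or.inr hc)
      · exact Or.inl (Or.inl hc)
      · exact Or.inr hc
    · exact caseA ⟨e₀, he₀⟩ hγ hD₁Ω hD₂Ω hLΩ hdom₁ hmin₁ hdom₂ hmin₂ hD₁D₂ hLD₁ hLD₂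
        hRdom hy hynd
  · push_neg at hA
    have hall : ∀ y ∈ G.edgeSet \ L, IsEdgeDominating G (L ∪ {y}) := by
      intro y hy
      by_cases h1 : y ∈ D₁ ∨ y ∈ D₂
      · exact hA y h1
      · push_neg at h1
        apply hRdom
        refine ⟨hy.1, ?_⟩
        rintro ((hc | hc) | hc)
        · exact h1.1 hc
        · exact h1.2 hc
        · exact hy.2 hc
    obtain ⟨x₁, hx₁, -, -, -⟩ := nonempty_two ⟨e₀, he₀⟩ hγ hD₁Ω hdom₁
    have hx₁Ω : x₁ ∈ G.edgeSet := hD₁Ω hx₁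
    have hx₁L : x₁ ∉ L := fun h => (Set.disjoint_left.mp hLD₁ h) hx₁
    have hLne : L.Nonempty := by
      rcases L.eq_empty_or_nonempty with rfl | h
      · exfalso
        have := hall x₁ ⟨hx₁Ω, fun h => h⟩
        rw [Set.empty_union] at this
        exact hγ x₁ hx₁Ω this
      · exact h
    exact caseB ⟨e₀, he₀⟩ hγ hD₂Ω hLΩ hdom₂ hLD₂ hLnd hLne hall hx₁Ω hx₁L
      (fun h => (Set.disjoint_left.mp hD₁D₂ hx₁) h)
end FourParts

section ECNumber
variable {V : Type*} [Fintype V] {G : SimpleGraph V}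

lemma bddAbove_K : BddAbove {k | ∃ P, IsECPartition G P ∧ P.ncard = k} :=
  ⟨G.edgeSet.ncard, fun _ ⟨_, hP, hk⟩ => hk ▸ ecp_ncard_le hP⟩

lemma EC_of_domedge {e₀ : Sym2 V} (hdom : IsEdgeDominating G {e₀}) :
    edgeCoalitionNumber G = G.edgeSet.ncard := by
  apply IsGreatest.csSup_eq
  constructor
  · exact ⟨_, singleton_partition hdom,
      Set.ncard_image_of_injective _ Set.singleton_injective⟩
  · rintro k ⟨P, hP, hk⟩
    exact hk ▸ ecp_ncard_le hP

lemma exists_incident_edge (hconn : G.Connected) (hΩne : G.edgeSet.Nonempty) (v : V) :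
    ∃ e ∈ G.edgeSet, v ∈ e := by
  obtain ⟨e, he⟩ := hΩne
  induction e using Sym2.ind with
  | _ a b =>
    by_cases hva : v = a
    · exact ⟨s(a,b), he, hva ▸ Sym2.mem_mk_left a b⟩
    · obtain ⟨w⟩ := hconn.preconnected v a
      cases w with
      | nil => exact absurd rfl hva
      | cons h p => exact ⟨s(v, _), (G.mem_edgeSet).mpr h, Sym2.mem_mk_left _ _⟩

lemma domedge_of_three (hconn : G.Connected) (h3 : G.edgeSet.ncard = 3) :
    ∃ e ∈ G.edgeSet, IsEdgeDominating G {e} := by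
  rw [Set.ncard_eq_three] at h3
  obtain ⟨f, g, h, hfg, hfh, hgh, hE⟩ := h3
  have hfΩ : f ∈ G.edgeSet := by rw [hE]; exact Or.inl rfl
  have hgΩ : g ∈ G.edgeSet := by rw [hE]; exact Or.inr (Or.inl rfl)
  have hhΩ : h ∈ G.edgeSet := by rw [hE]; exact Or.inr (Or.inr rfl)
  have aux : ∀ a b c : Sym2 V, G.edgeSet = {a, b, c} → a ≠ b → a ≠ c → b ≠ c →
      SharesEndpoint a b → ∃ e ∈ G.edgeSet, IsEdgeDominating G {e} := by
    intro a b c hE' hab hac hbc hsh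
    have haΩ : a ∈ G.edgeSet := by rw [hE']; exact Or.inl rfl
    have hbΩ : b ∈ G.edgeSet := by rw [hE']; exact Or.inr (Or.inl rfl)
    have hcΩ : c ∈ G.edgeSet := by rw [hE']; exact Or.inr (Or.inr rfl)
    obtain ⟨p, hpΩ, hpc, hpsh⟩ := exists_other_sharing hconn hcΩ haΩ hac
    have hp : p = a ∨ p = b := by
      rw [hE'] at hpΩ
      rcases hpΩ with h' | h' | h'
      · exact Or.inl h'
      · exact Or.inr h'
      · exact absurd h' hpc
    rcases hp with rfl | rfl
    · refine ⟨p, haΩ, Set.singleton_subset_iff.mpr haΩ, fun k hk => ?_⟩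
      have hk' : k = b ∨ k = c := by
        have := hk.1
        rw [hE'] at this
        rcases this with h' | h' | h'
        · exact absurd (Set.mem_singleton_iff.mpr h') hk.2
        · exact Or.inl h'
        · exact Or.inr h'
      rcases hk' with rfl | rfl
      · exact ⟨p, rfl, shares_comm hsh⟩
      · exact ⟨p, rfl, hpsh⟩
    · refine ⟨p, hbΩ, Set.singleton_subset_iff.mpr hbΩ, fun k hk => ?_⟩
      have hk' : k = a ∨ k = c := by
        have := hk.1
        rw [hE'] at this
        rcases this with h' | h' | h'
        · exact Or.inl h'
        · exact absurd (Set.mem_singleton_iff.mpr h') hk.2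
        · exact Or.inr h'
      rcases hk' with rfl | rfl
      · exact ⟨p, rfl, hsh⟩
      · exact ⟨p, rfl, hpsh⟩
  obtain ⟨p, hpΩ, hpf, hpsh⟩ := exists_other_sharing hconn hfΩ hgΩ (fun x => hfg x.symm)
  have hp : p = g ∨ p = h := by
    rw [hE] at hpΩ
    rcases hpΩ with h' | h' | h'
    · exact absurd h' hpf
    · exact Or.inl h'
    · exact Or.inr h'
  rcases hp with rfl | rfl
  · exact aux f p h hE hfg hfh hgh hpsh
  · refine aux f p g ?_ hfh hfg (fun x => hgh x.symm) hpsh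
    rw [hE]
    ext e
    simp only [Set.mem_insert_iff, Set.mem_singleton_iff]
    tauto
end ECNumber


section Targets

lemma K3_edgeSet : (⊤ : SimpleGraph (Fin 3)).edgeSet = {s(0,1), s(0,2), s(1,2)} := by
  ext e
  induction e using Sym2.ind with
  | _ x y =>
    simp only [SimpleGraph.mem_edgeSet, SimpleGraph.top_adj, Set.mem_insert_iff,
      Set.mem_singleton_iff, Sym2.eq_iff]
    revert x y
    decide

lemma path4_edgeSet : (SimpleGraph.pathGraph 4).edgeSet = {s(0,1), s(1,2), s(2,3)} := by
  ext e
  induction e using Sym2.ind with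
  | _ x y =>
    simp only [SimpleGraph.mem_edgeSet, SimpleGraph.pathGraph_adj, Set.mem_insert_iff,
      Set.mem_singleton_iff, Sym2.eq_iff]
    revert x y
    decide

lemma star3_edgeSet : (_root_.starGraph 3).edgeSet = {s(0,1), s(0,2), s(0,3)} := by
  ext e
  induction e using Sym2.ind with
  | _ x y =>
    simp only [SimpleGraph.mem_edgeSet, _root_.starGraph, SimpleGraph.fromRel_adj, Set.mem_insert_iff,
      Set.mem_singleton_iff, Sym2.eq_iff]
    revert x y
    decide

lemma K3_ncard : (⊤ : SimpleGraph (Fin 3)).edgeSet.ncard = 3 := by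
  rw [K3_edgeSet]
  rw [Set.ncard_insert_of_notMem (by decide) ((Set.finite_singleton _).insert _),
    Set.ncard_insert_of_notMem (by decide) (Set.finite_singleton _), Set.ncard_singleton]

lemma path4_ncard : (SimpleGraph.pathGraph 4).edgeSet.ncard = 3 := by
  rw [path4_edgeSet]
  rw [Set.ncard_insert_of_notMem (by decide) ((Set.finite_singleton _).insert _),
    Set.ncard_insert_of_notMem (by decide) (Set.finite_singleton _), Set.ncard_singleton]

lemma star3_ncard : (_root_.starGraph 3).edgeSet.ncard = 3 := by
  rw [star3_edgeSet]
  rw [Set.ncard_insert_of_notMem (by decide) ((Set.finite_singleton _).insert _),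
    Set.ncard_insert_of_notMem (by decide) (Set.finite_singleton _), Set.ncard_singleton]

lemma ncard_edgeSet_iso {V W : Type*} {G : SimpleGraph V} {H : SimpleGraph W} (φ : G ≃g H) :
    G.edgeSet.ncard = H.edgeSet.ncard := by
  rw [← Nat.card_coe_set_eq, ← Nat.card_coe_set_eq]
  exact Nat.card_congr φ.mapEdgeSet

end Targets

section Isos
variable {V : Type*} {G : SimpleGraph V}

lemma iso_path (a b c d : V) (hab : a ≠ b) (hac : a ≠ c) (had : a ≠ d) (hbc : b ≠ c)
    (hbd : b ≠ d) (hcd : c ≠ d) (hcov : ∀ v : V, v = a ∨ v = b ∨ v = c ∨ v = d)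
    (hE : G.edgeSet = {s(a,b), s(b,c), s(c,d)}) :
    Nonempty (G ≃g SimpleGraph.pathGraph 4) := by
  classical
  have hGad : ∀ x y : V, G.Adj x y ↔ ((x = a ∧ y = b) ∨ (x = b ∧ y = a) ∨ (x = b ∧ y = c) ∨
      (x = c ∧ y = b) ∨ (x = c ∧ y = d) ∨ (x = d ∧ y = c)) := by
    intro x y
    rw [← SimpleGraph.mem_edgeSet, hE]
    simp only [Set.mem_insert_iff, Set.mem_singleton_iff, Sym2.eq_iff]
    tauto
  refine ⟨RelIso.symm ⟨Equiv.mk (![a,b,c,d]) (fun v => if v = a then 0 else if v = b then 1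
    else if v = c then 2 else 3) ?_ ?_, ?_⟩⟩
  · intro i
    fin_cases i <;>
      simp [hab, hac, had, hbc, hbd, hcd, hab.symm, hac.symm, had.symm, hbc.symm, hbd.symm,
        hcd.symm]
  · intro v
    rcases hcov v with rfl | rfl | rfl | rfl <;>
      simp [hab, hac, had, hbc, hbd, hcd, hab.symm, hac.symm, had.symm, hbc.symm, hbd.symm,
        hcd.symm]
  · intro i j
    fin_cases i <;> fin_cases j <;>
      simp [hGad, SimpleGraph.pathGraph_adj, hab, hac, had, hbc, hbd, hcd, hab.symm, hac.symm,
        had.symm, hbc.symm, hbd.symm, hcd.symm] <;> decide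
end Isos

section Isos2
variable {V : Type*} {G : SimpleGraph V}

lemma iso_star (a b c d : V) (hab : a ≠ b) (hac : a ≠ c) (had : a ≠ d) (hbc : b ≠ c)
    (hbd : b ≠ d) (hcd : c ≠ d) (hcov : ∀ v : V, v = a ∨ v = b ∨ v = c ∨ v = d)
    (hE : G.edgeSet = {s(a,b), s(a,c), s(a,d)}) :
    Nonempty (G ≃g _root_.starGraph 3) := by
  classical
  have hGad : ∀ x y : V, G.Adj x y ↔ ((x = a ∧ y = b) ∨ (x = b ∧ y = a) ∨ (x = a ∧ y = c) ∨
      (x = c ∧ y = a) ∨ (x = a ∧ y = d) ∨ (x = d ∧ y = a)) := by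
    intro x y
    rw [← SimpleGraph.mem_edgeSet, hE]
    simp only [Set.mem_insert_iff, Set.mem_singleton_iff, Sym2.eq_iff]
    tauto
  refine ⟨RelIso.symm ⟨Equiv.mk (![a,b,c,d]) (fun v => if v = a then 0 else if v = b then 1
    else if v = c then 2 else 3) ?_ ?_, ?_⟩⟩
  · intro i
    fin_cases i <;>
      simp [hab, hac, had, hbc, hbd, hcd, hab.symm, hac.symm, had.symm, hbc.symm, hbd.symm,
        hcd.symm]
  · intro v
    rcases hcov v with rfl | rfl | rfl | rfl <;>
      simp [hab, hac, had, hbc, hbd, hcd, hab.symm, hac.symm, had.symm, hbc.symm, hbd.symm,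
        hcd.symm]
  · intro i j
    fin_cases i <;> fin_cases j <;>
      simp [hGad, _root_.starGraph, SimpleGraph.fromRel_adj, hab, hac, had, hbc, hbd, hcd, hab.symm,
        hac.symm, had.symm, hbc.symm, hbd.symm, hcd.symm] <;> decide

lemma iso_K3 (a b c : V) (hab : a ≠ b) (hac : a ≠ c) (hbc : b ≠ c)
    (hcov : ∀ v : V, v = a ∨ v = b ∨ v = c)
    (hE : G.edgeSet = {s(a,b), s(a,c), s(b,c)}) :
    Nonempty (G ≃g (⊤ : SimpleGraph (Fin 3))) := by
  classical
  have hGad : ∀ x y : V, G.Adj x y ↔ ((x = a ∧ y = b) ∨ (x = b ∧ y = a) ∨ (x = a ∧ y = c) ∨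
      (x = c ∧ y = a) ∨ (x = b ∧ y = c) ∨ (x = c ∧ y = b)) := by
    intro x y
    rw [← SimpleGraph.mem_edgeSet, hE]
    simp only [Set.mem_insert_iff, Set.mem_singleton_iff, Sym2.eq_iff]
    tauto
  refine ⟨RelIso.symm ⟨Equiv.mk (![a,b,c]) (fun v => if v = a then 0 else if v = b then 1
    else 2) ?_ ?_, ?_⟩⟩
  · intro i
    fin_cases i <;>
      simp [hab, hac, hbc, hab.symm, hac.symm, hbc.symm]
  · intro v
    rcases hcov v with rfl | rfl | rfl <;>
      simp [hab, hac, hbc, hab.symm, hac.symm, hbc.symm]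
  · intro i j
    fin_cases i <;> fin_cases j <;>
      simp [hGad, hab, hac, hbc, hab.symm, hac.symm, hbc.symm] <;> decide
end Isos2

section Classify
variable {V : Type*} [Fintype V] {G : SimpleGraph V}

omit [Fintype V] in
lemma classify_aux2 (hcov : ∀ v : V, ∃ e ∈ G.edgeSet, v ∈ e)
    (c p q : V) (h : Sym2 V) (hcp : c ≠ p) (hcq : c ≠ q) (hpq : p ≠ q)
    (hΩ : G.edgeSet = {s(c,p), s(c,q), h}) (hch : c ∉ h) (hph : p ∈ h) :
    Nonempty (G ≃g (⊤ : SimpleGraph (Fin 3))) ∨ Nonempty (G ≃g SimpleGraph.pathGraph 4) := by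
  obtain ⟨r, rfl⟩ := Sym2.mem_iff_exists.mp hph
  have hhΩ : s(p,r) ∈ G.edgeSet := by rw [hΩ]; exact Or.inr (Or.inr rfl)
  have hpr : p ≠ r := (G.mem_edgeSet.mp hhΩ).ne
  have hrc : r ≠ c := by
    rintro rfl
    exact hch (Sym2.mem_mk_right p r)
  by_cases hq : q ∈ s(p,r)
  · -- triangle
    have hqr : q = r := by
      rcases Sym2.mem_iff.mp hq with h' | h'
      · exact absurd h'.symm hpq
      · exact h'
    subst hqr
    refine Or.inl (iso_K3 c p q hcp hcq hpq ?_ hΩ)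
    intro v
    obtain ⟨e, heΩ, hv⟩ := hcov v
    rw [hΩ] at heΩ
    rcases heΩ with rfl | rfl | rfl <;> rw [Sym2.mem_iff] at hv <;> tauto
  · -- path q - c - p - r
    have hqr : q ≠ r := fun h' => hq (h' ▸ Sym2.mem_mk_right p r)
    refine Or.inr (iso_path q c p r hcq.symm hpq.symm hqr hcp hrc.symm hpr ?_ ?_)
    · intro v
      obtain ⟨e, heΩ, hv⟩ := hcov v
      rw [hΩ] at heΩ
      rcases heΩ with rfl | rfl | rfl <;> rw [Sym2.mem_iff] at hv <;> tauto
    · rw [hΩ]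
      have hs : s(q,c) = s(c,q) := Sym2.eq_swap
      rw [hs]
      ext e
      simp only [Set.mem_insert_iff, Set.mem_singleton_iff]
      tauto

lemma classify (hconn : G.Connected) (h3 : G.edgeSet.ncard = 3) :
    Nonempty (G ≃g (⊤ : SimpleGraph (Fin 3))) ∨ Nonempty (G ≃g SimpleGraph.pathGraph 4) ∨
      Nonempty (G ≃g _root_.starGraph 3) := by
  have hΩne : G.edgeSet.Nonempty := Set.nonempty_of_ncard_ne_zero (by omega)
  have hcov : ∀ v : V, ∃ e ∈ G.edgeSet, v ∈ e := exists_incident_edge hconn hΩne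
  rw [Set.ncard_eq_three] at h3
  obtain ⟨f, g, h, hfg, hfh, hgh, hE⟩ := h3
  have hfΩ : f ∈ G.edgeSet := by rw [hE]; exact Or.inl rfl
  have hgΩ : g ∈ G.edgeSet := by rw [hE]; exact Or.inr (Or.inl rfl)
  have hhΩ : h ∈ G.edgeSet := by rw [hE]; exact Or.inr (Or.inr rfl)
  -- an inner step: given the sharing pair is (f₁, g₁) with remaining edge h₁
  have main : ∀ f₁ g₁ h₁ : Sym2 V, G.edgeSet = {f₁, g₁, h₁} → f₁ ≠ g₁ → f₁ ≠ h₁ → g₁ ≠ h₁ →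
      SharesEndpoint f₁ g₁ →
      Nonempty (G ≃g (⊤ : SimpleGraph (Fin 3))) ∨ Nonempty (G ≃g SimpleGraph.pathGraph 4) ∨
        Nonempty (G ≃g _root_.starGraph 3) := by
    intro f₁ g₁ h₁ hE₁ hfg₁ hfh₁ hgh₁ hsh
    have hf₁Ω : f₁ ∈ G.edgeSet := by rw [hE₁]; exact Or.inl rfl
    have hg₁Ω : g₁ ∈ G.edgeSet := by rw [hE₁]; exact Or.inr (Or.inl rfl)
    have hh₁Ω : h₁ ∈ G.edgeSet := by rw [hE₁]; exact Or.inr (Or.inr rfl)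
    obtain ⟨c, hcf, hcg⟩ := hsh
    obtain ⟨p, rfl⟩ := Sym2.mem_iff_exists.mp hcf
    obtain ⟨q, rfl⟩ := Sym2.mem_iff_exists.mp hcg
    have hcp : c ≠ p := (G.mem_edgeSet.mp hf₁Ω).ne
    have hcq : c ≠ q := (G.mem_edgeSet.mp hg₁Ω).ne
    have hpq : p ≠ q := by
      rintro rfl
      exact hfg₁ rfl
    by_cases hch : c ∈ h₁
    · -- star with centre c
      obtain ⟨r, rfl⟩ := Sym2.mem_iff_exists.mp hch
      have hcr : c ≠ r := (G.mem_edgeSet.mp hh₁Ω).ne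
      have hpr : p ≠ r := by
        rintro rfl
        exact hfh₁ rfl
      have hqr : q ≠ r := by
        rintro rfl
        exact hgh₁ rfl
      refine Or.inr (Or.inr (iso_star c p q r hcp hcq hcr hpq hpr hqr ?_ hE₁))
      intro v
      obtain ⟨e, heΩ, hv⟩ := hcov v
      rw [hE₁] at heΩ
      rcases heΩ with rfl | rfl | rfl <;> rw [Sym2.mem_iff] at hv <;> tauto
    · -- no common vertex : h₁ shares with f₁ or g₁
      obtain ⟨k, hkΩ, hkh, hksh⟩ := exists_other_sharing hconn hh₁Ω hf₁Ω hfh₁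
      have hk : k = s(c,p) ∨ k = s(c,q) := by
        rw [hE₁] at hkΩ
        rcases hkΩ with h' | h' | h'
        · exact Or.inl h'
        · exact Or.inr h'
        · exact absurd h' hkh
      obtain ⟨t, hth, htk⟩ := hksh
      rcases hk with rfl | rfl
      · have htp : t = p := by
          rcases Sym2.mem_iff.mp htk with h' | h'
          · exact absurd (h' ▸ hth) hch
          · exact h'
        subst htp
        rcases classify_aux2 hcov c t q h₁ hcp hcq hpq hE₁ hch hth with h' | h'
        · exact Or.inl h'
        · exact Or.inr (Or.inl h')
      · have htq : t = q := by
          rcases Sym2.mem_iff.mp htk with h' | h'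
          · exact absurd (h' ▸ hth) hch
          · exact h'
        subst htq
        have hE₁' : G.edgeSet = {s(c,t), s(c,p), h₁} := by
          rw [hE₁]
          ext e
          simp only [Set.mem_insert_iff, Set.mem_singleton_iff]
          tauto
        rcases classify_aux2 hcov c t p h₁ hcq hcp hpq.symm hE₁' hch hth with h' | h'
        · exact Or.inl h'
        · exact Or.inr (Or.inl h')
  obtain ⟨k, hkΩ, hkf, hksh⟩ := exists_other_sharing hconn hfΩ hgΩ (fun x => hfg x.symm)
  have hk : k = g ∨ k = h := by
    rw [hE] at hkΩ
    rcases hkΩ with h' | h' | h'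
    · exact absurd h' hkf
    · exact Or.inl h'
    · exact Or.inr h'
  rcases hk with rfl | rfl
  · exact main f k h hE hfg hfh hgh hksh
  · refine main f k g ?_ hfh hfg (fun x => hgh x.symm) hksh
    rw [hE]
    ext e
    simp only [Set.mem_insert_iff, Set.mem_singleton_iff]
    tauto
end Classify

/-- For a finite connected simple graph, `EC(G) = 3` iff `G` is isomorphic to
one of `K₃`, `P₄`, `K_{1,3}`. -/
theorem edgeCoalitionNumber_eq_three_iff {V : Type*} [Fintype V] (G : SimpleGraph V)
    (hconn : G.Connected) :
    edgeCoalitionNumber G = 3 ↔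
      (Nonempty (G ≃g (⊤ : SimpleGraph (Fin 3))) ∨
       Nonempty (G ≃g SimpleGraph.pathGraph 4) ∨
       Nonempty (G ≃g _root_.starGraph 3)) := by
  constructor
  · intro hEC
    rcases Set.eq_empty_or_nonempty G.edgeSet with hemp | hΩne
    · exfalso
      have hK : {k | ∃ P, IsECPartition G P ∧ P.ncard = k} ⊆ {0} := by
        rintro k ⟨P, hP, rfl⟩
        have hPe : P = ∅ := by
          ext A
          simp only [Set.mem_empty_iff_false, iff_false]
          intro hA
          obtain ⟨e, he⟩ := hP.1 A hA
          have hm : e ∈ ⋃₀ P := ⟨A, hA, he⟩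
          rw [hP.2.2.1, hemp] at hm
          exact hm
        simp [hPe]
      have h0 : edgeCoalitionNumber G = 0 := by
        rw [edgeCoalitionNumber]
        rcases Set.subset_singleton_iff_eq.mp hK with h' | h'
        · rw [h']
          exact csSup_empty
        · rw [h']
          exact csSup_singleton 0
      rw [hEC] at h0
      exact three_ne_zero h0
    · by_cases hsing : ∃ e ∈ G.edgeSet, IsEdgeDominating G {e}
      · obtain ⟨e₀, he₀, hdom⟩ := hsing
        have hm := EC_of_domedge hdom
        rw [hEC] at hm
        exact classify hconn hm.symm
      · exfalso
        push_neg at hsing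
        obtain ⟨P, hP, h4⟩ := four_parts hconn hΩne hsing
        have hle : P.ncard ≤ edgeCoalitionNumber G := le_csSup bddAbove_K ⟨P, hP, rfl⟩
        rw [hEC] at hle
        omega
  · intro hiso
    have hm : G.edgeSet.ncard = 3 := by
      rcases hiso with h | h | h
      · obtain ⟨φ⟩ := h
        exact (ncard_edgeSet_iso φ).trans K3_ncard
      · obtain ⟨φ⟩ := h
        exact (ncard_edgeSet_iso φ).trans path4_ncard
      · obtain ⟨φ⟩ := h
        exact (ncard_edgeSet_iso φ).trans star3_ncard
    obtain ⟨e₀, he₀, hdom⟩ := domedge_of_three hconn hm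
    rw [EC_of_domedge hdom, hm]
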